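/- Let U = {±u, ±v} with u, v ∈ S¹ linearly independent. Then the closure of the convex hull of the cone-volume set C_cv(U) equals conv{ (1/2)(e₁+e₂), (1/2)(e₁+e₄), (1/2)(e₃+e₂), (1/2)(e₃+e₄) }, where indices 1,3 correspond to ±u and 2,4 to ±v. -/

import Mathlib

open MeasureTheory

noncomputable section

abbrev V2 : Type := EuclideanSpace ℝ (Fin 2)

/-- The positive hull: all nonnegative linear combinations of elements of `M`. -/
def pos {E : Type*} [AddCommMonoid E] [Module ℝ E] (M : Set E) : Set E :=
  {x | ∃ (s : Finset E) (c : E → ℝ),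
    (↑s : Set E) ⊆ M ∧ (∀ v, 0 ≤ c v) ∧ x = ∑ v ∈ s, c v • v}

/-- The polyhedron `P(U,b) = {x : ⟨uᵢ,x⟩ ≤ bᵢ for all i}`. -/
def polyP {m : ℕ} (u : Fin m → V2) (b : Fin m → ℝ) : Set V2 :=
  {x | ∀ i, (inner ℝ (u i) x : ℝ) ≤ b i}

/-- The face of `P(U,b)` with outer normal `uᵢ`. -/
def faceF {m : ℕ} (u : Fin m → V2) (b : Fin m → ℝ) (i : Fin m) : Set V2 :=
  {x ∈ polyP u b | (inner ℝ (u i) x : ℝ) = b i}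

/-- The cone-volume vector of `P(U,b)`: entry `i` is the area of `conv({0} ∪ Fᵢ(b))`. -/
def cv {m : ℕ} (u : Fin m → V2) (b : Fin m → ℝ) : Fin m → ℝ :=
  fun i => (volume (convexHull ℝ (insert 0 (faceF u b i)))).toReal

/-- The cone-volume set `C_cv(U)`. -/
def Ccv {m : ℕ} (u : Fin m → V2) : Set (Fin m → ℝ) :=
  {g | ∃ b : Fin m → ℝ, (∀ i, 0 ≤ b i) ∧
    (volume (polyP u b)).toReal = 1 ∧ g = cv u b}

/-- The subspace concentration polytope
`P_scc(U) = conv{ (1/2)(eᵢ+eⱼ) : uᵢ, uⱼ linearly independent }`. -/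
def Pscc {m : ℕ} (u : Fin m → V2) : Set (Fin m → ℝ) :=
  convexHull ℝ
    {x | ∃ i j, LinearIndependent ℝ ![u i, u j] ∧
      x = (1 / 2 : ℝ) • (Pi.single i 1 + Pi.single j 1)}

/-- Indices `i` with `uᵢ ∈ U_Δ`: some triple containing `uᵢ` positively spans `ℝ²`. -/
def DeltaIdx {m : ℕ} (u : Fin m → V2) : Set (Fin m) :=
  {i | ∃ j k, pos {u i, u j, u k} = Set.univ}

/-- Indices `i` with `uᵢ ∈ U_□`. -/
def SqIdx {m : ℕ} (u : Fin m → V2) : Set (Fin m) :=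
  {i | ¬ ∃ j k, pos {u i, u j, u k} = Set.univ}

/-- Indices `k` with `u_k ∈ U_{□,uᵢ}`: `u_k` together with some `u_l` completes
`{uᵢ, -uᵢ}` to a positively spanning quadruple. -/
def SqAdj {m : ℕ} (u : Fin m → V2) (i : Fin m) : Set (Fin m) :=
  {k | ∃ l, pos {u i, -u i, u k, u l} = Set.univ}

namespace SccAux
open Set

/-! ### generic helpers -/

def pt (s t : ℝ) : V2 := (WithLp.equiv 2 (Fin 2 → ℝ)).symm ![s, t]

lemma pt_0 (s t : ℝ) : pt s t 0 = s := rfl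
lemma pt_1 (s t : ℝ) : pt s t 1 = t := rfl

lemma pt_eta (y : V2) : pt (y 0) (y 1) = y := by
  ext j; fin_cases j <;> rfl

lemma pt_smul_add (a b s t s' t' : ℝ) :
    a • pt s t + b • pt s' t' = pt (a*s + b*s') (a*t + b*t') := by
  ext j; fin_cases j <;> rfl

lemma pt_eq (s t : ℝ) (y : V2) (h1 : s = y 0) (h2 : t = y 1) : pt s t = y := by
  subst h1; subst h2; exact pt_eta y

lemma scc_seg_mem (P Q y : V2) (a b : ℝ) (ha : 0 ≤ a) (hb : 0 ≤ b) (hab : a + b = 1)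
    (h : a • P + b • Q = y) : y ∈ convexHull ℝ {P, Q} := by
  rw [convexHull_pair]
  exact ⟨a, b, ha, hb, hab, h⟩

lemma scc_vert_seg (cst p q : ℝ) (hpq : p ≤ q) :
    {y : V2 | y 0 = cst ∧ y 1 ∈ Icc p q} = convexHull ℝ {pt cst p, pt cst q} := by
  apply Subset.antisymm
  · rintro y ⟨h0, h1, h2⟩
    rcases eq_or_lt_of_le hpq with h | h
    · refine scc_seg_mem _ _ _ 1 0 (by norm_num) le_rfl (by norm_num)
        ((pt_smul_add 1 0 cst p cst q).trans (pt_eq _ _ _ (by rw [h0]; ring)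
          (by linarith [le_antisymm (h ▸ h2) h1])))
    · refine scc_seg_mem _ _ _ ((q - y 1)/(q - p)) ((y 1 - p)/(q - p))
        (div_nonneg (by linarith) (by linarith)) (div_nonneg (by linarith) (by linarith))
        (by rw [← add_div, show q - y 1 + (y 1 - p) = q - p by ring]
            exact div_self (by linarith))
        ((pt_smul_add _ _ cst p cst q).trans (pt_eq _ _ _ ?_ ?_))
      · rw [h0]; have hne : q - p ≠ 0 := by linarith
        field_simp [hne]; ring
      · have hne : q - p ≠ 0 := by linarith
        field_simp [hne]; ring
  · rintro y hy
    rw [convexHull_pair] at hy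
    obtain ⟨a, b, ha, hb, hab, rfl⟩ := hy
    rw [pt_smul_add]
    have hh : 0 ≤ b * (q - p) := mul_nonneg hb (by linarith)
    have hh2 : 0 ≤ a * (q - p) := mul_nonneg ha (by linarith)
    have e1 : a*p + b*q - p = b*(q-p) := by linear_combination p * hab
    have e2 : q - (a*p + b*q) = a*(q-p) := by linear_combination (-q) * hab
    refine ⟨?_, ?_, ?_⟩
    · rw [pt_0]; linear_combination cst * hab
    · rw [pt_1]; linarith
    · rw [pt_1]; linarith

lemma scc_horiz_seg (cst p q : ℝ) (hpq : p ≤ q) :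
    {y : V2 | y 0 ∈ Icc p q ∧ y 1 = cst} = convexHull ℝ {pt p cst, pt q cst} := by
  apply Subset.antisymm
  · rintro y ⟨⟨h1, h2⟩, h0⟩
    rcases eq_or_lt_of_le hpq with h | h
    · refine scc_seg_mem _ _ _ 1 0 (by norm_num) le_rfl (by norm_num)
        ((pt_smul_add 1 0 p cst q cst).trans (pt_eq _ _ _
          (by linarith [le_antisymm (h ▸ h2) h1]) (by rw [h0]; ring)))
    · refine scc_seg_mem _ _ _ ((q - y 0)/(q - p)) ((y 0 - p)/(q - p))
        (div_nonneg (by linarith) (by linarith)) (div_nonneg (by linarith) (by linarith))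
        (by rw [← add_div, show q - y 0 + (y 0 - p) = q - p by ring]
            exact div_self (by linarith))
        ((pt_smul_add _ _ p cst q cst).trans (pt_eq _ _ _ ?_ ?_))
      · have hne : q - p ≠ 0 := by linarith
        field_simp [hne]; ring
      · rw [h0]; have hne : q - p ≠ 0 := by linarith
        field_simp [hne]; ring
  · rintro y hy
    rw [convexHull_pair] at hy
    obtain ⟨a, b, ha, hb, hab, rfl⟩ := hy
    rw [pt_smul_add]
    have hh : 0 ≤ b * (q - p) := mul_nonneg hb (by linarith)
    have hh2 : 0 ≤ a * (q - p) := mul_nonneg ha (by linarith)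
    have e1 : a*p + b*q - p = b*(q-p) := by linear_combination p * hab
    have e2 : q - (a*p + b*q) = a*(q-p) := by linear_combination (-q) * hab
    refine ⟨⟨?_, ?_⟩, ?_⟩
    · rw [pt_0]; linarith
    · rw [pt_0]; linarith
    · rw [pt_1]; linear_combination cst * hab

lemma scc_preimage_convexHull (f : V2 →ₗ[ℝ] V2) (hf : Function.Bijective f) (s : Set V2) :
    f ⁻¹' (convexHull ℝ s) = convexHull ℝ (f ⁻¹' s) := by
  have h1 : s = f '' (f ⁻¹' s) := (Set.image_preimage_eq s hf.2).symm
  conv_lhs => rw [h1, ← f.image_convexHull]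
  rw [Set.preimage_image_eq _ hf.1]

lemma scc_preimage_insert_zero (f : V2 →ₗ[ℝ] V2) (hf : Function.Bijective f) (s : Set V2) :
    f ⁻¹' (insert 0 s) = insert 0 (f ⁻¹' s) := by
  ext x
  simp only [Set.mem_preimage, Set.mem_insert_iff]
  constructor
  · rintro (h | h)
    · left; exact hf.1 (by rw [h, map_zero])
    · right; exact h
  · rintro (rfl | h)
    · left; exact map_zero f
    · right; exact h

lemma scc_conv_insert_conv (x : V2) (s : Set V2) :
    convexHull ℝ (insert x (convexHull ℝ s)) = convexHull ℝ (insert x s) := by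
  apply Subset.antisymm
  · apply convexHull_min _ (convex_convexHull _ _)
    rintro y (rfl | hy)
    · exact subset_convexHull _ _ (Set.mem_insert _ _)
    · exact convexHull_mono (Set.subset_insert _ _) hy
  · exact convexHull_mono (Set.insert_subset_insert (subset_convexHull _ _))

/-! ### volumes -/

lemma scc_tri_prod_vol :
    volume {p : ℝ × ℝ | 0 ≤ p.1 ∧ 0 ≤ p.2 ∧ p.1 + p.2 ≤ 1} = ENNReal.ofReal (1/2) := by
  have hm : MeasurableSet {p : ℝ × ℝ | 0 ≤ p.1 ∧ 0 ≤ p.2 ∧ p.1 + p.2 ≤ 1} := by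
    apply IsClosed.measurableSet
    exact (isClosed_le continuous_const continuous_fst).inter
      ((isClosed_le continuous_const continuous_snd).inter
        (isClosed_le (continuous_fst.add continuous_snd) continuous_const))
  rw [show (volume : Measure (ℝ × ℝ)) = (volume : Measure ℝ).prod volume from rfl,
    Measure.prod_apply hm]
  have hslice : ∀ x : ℝ, (Prod.mk x ⁻¹' {p : ℝ × ℝ | 0 ≤ p.1 ∧ 0 ≤ p.2 ∧ p.1 + p.2 ≤ 1})
      = if 0 ≤ x then Icc 0 (1 - x) else ∅ := by
    intro x
    split_ifs with hx
    · ext y; simp [hx, mem_Icc]; intro _; constructor <;> intro h <;> linarith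
    · ext y; simp [hx]
  have hv : ∀ x : ℝ, volume (Prod.mk x ⁻¹' {p : ℝ × ℝ | 0 ≤ p.1 ∧ 0 ≤ p.2 ∧ p.1 + p.2 ≤ 1})
      = Set.indicator (Icc (0:ℝ) 1) (fun x => ENNReal.ofReal (1 - x)) x := by
    intro x
    rw [hslice]
    rcases le_or_gt 0 x with hx | hx
    · rcases le_or_gt x 1 with hx1 | hx1
      · simp [hx, Real.volume_Icc, indicator_of_mem (mem_Icc.2 ⟨hx, hx1⟩)]
      · simp only [if_pos hx, Real.volume_Icc]
        rw [indicator_of_notMem (by simp [mem_Icc]; intro; linarith)]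
        rw [ENNReal.ofReal_eq_zero.2 (by linarith)]
    · simp [not_le.2 hx, indicator_of_notMem (by simp [mem_Icc]; intro; linarith : x ∉ Icc (0:ℝ) 1)]
  simp_rw [hv]
  rw [lintegral_indicator measurableSet_Icc]
  rw [← ofReal_integral_eq_lintegral_ofReal]
  · congr 1
    rw [integral_Icc_eq_integral_Ioc, ← intervalIntegral.integral_of_le (by norm_num)]
    have : ∫ x in (0:ℝ)..1, (1 - x) = 1/2 := by
      rw [intervalIntegral.integral_sub intervalIntegrable_const
        intervalIntegral.intervalIntegrable_id]
      simp
      norm_num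
    rw [this]
  · exact (continuous_const.sub continuous_id).integrableOn_Icc
  · filter_upwards [ae_restrict_mem measurableSet_Icc] with x hx
    simp only [Pi.zero_apply]; simp [mem_Icc] at hx; linarith [hx.2]

lemma scc_std_tri_eq :
    (convexHull ℝ {(0:V2), EuclideanSpace.single 0 1, EuclideanSpace.single 1 1})
      = {x : V2 | 0 ≤ x 0 ∧ 0 ≤ x 1 ∧ x 0 + x 1 ≤ 1} := by
  apply Subset.antisymm
  · apply convexHull_min
    · rintro x (rfl | rfl | rfl)
      · simp
      · simp [EuclideanSpace.single_apply]
      · simp [EuclideanSpace.single_apply]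
    · intro x hx y hy a b ha hb hab
      obtain ⟨hx0, hx1, hx2⟩ := hx
      obtain ⟨hy0, hy1, hy2⟩ := hy
      refine ⟨?_, ?_, ?_⟩ <;>
        simp only [PiLp.add_apply, PiLp.smul_apply, smul_eq_mul] <;> nlinarith
  · rintro x ⟨hx0, hx1, hx2⟩
    have hx : x = ∑ i : Fin 3, (![1 - x 0 - x 1, x 0, x 1] i) •
        (![0, EuclideanSpace.single 0 1, EuclideanSpace.single 1 1] i) := by
      ext j
      fin_cases j <;>
        simp [Fin.sum_univ_three, EuclideanSpace.single_apply]
    rw [hx]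
    apply (convex_convexHull ℝ _).sum_mem
    · intro i _; fin_cases i <;> simp <;> linarith
    · simp [Fin.sum_univ_three]; ring
    · intro i _
      apply subset_convexHull
      fin_cases i <;> simp

lemma scc_std_tri_vol :
    volume (convexHull ℝ {(0:V2), EuclideanSpace.single 0 1, EuclideanSpace.single 1 1})
      = ENNReal.ofReal (1/2) := by
  rw [scc_std_tri_eq]
  have hm : MeasurableSet {p : ℝ × ℝ | 0 ≤ p.1 ∧ 0 ≤ p.2 ∧ p.1 + p.2 ≤ 1} := by
    apply IsClosed.measurableSet
    exact (isClosed_le continuous_const continuous_fst).inter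
      ((isClosed_le continuous_const continuous_snd).inter
        (isClosed_le (continuous_fst.add continuous_snd) continuous_const))
  have h1 := (volume_preserving_finTwoArrow ℝ).comp
    (EuclideanSpace.volume_preserving_symm_measurableEquiv_toLp (Fin 2))
  have h2 := h1.measure_preimage (s := {p : ℝ × ℝ | 0 ≤ p.1 ∧ 0 ≤ p.2 ∧ p.1 + p.2 ≤ 1})
    hm.nullMeasurableSet
  rw [← scc_tri_prod_vol, ← h2]
  rfl

lemma scc_triangle_vol (P Q : V2) :
    volume (convexHull ℝ {(0:V2), P, Q}) = ENNReal.ofReal (|P 0 * Q 1 - P 1 * Q 0| / 2) := by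
  set N : Matrix (Fin 2) (Fin 2) ℝ := !![P 0, Q 0; P 1, Q 1] with hN
  have himg : Matrix.toEuclideanLin N '' (convexHull ℝ {(0:V2), EuclideanSpace.single 0 1,
      EuclideanSpace.single 1 1}) = convexHull ℝ {(0:V2), P, Q} := by
    rw [(Matrix.toEuclideanLin N).image_convexHull]
    congr 1
    rw [Set.image_insert_eq, Set.image_insert_eq, Set.image_singleton]
    congr 1
    · exact map_zero _
    congr 1
    · ext i
      simp [Matrix.toEuclideanLin_apply, Matrix.mulVec, dotProduct, Fin.sum_univ_two,
        EuclideanSpace.single_apply]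
      fin_cases i <;> simp [hN]
    · congr 1
      ext i
      simp [Matrix.toEuclideanLin_apply, Matrix.mulVec, dotProduct, Fin.sum_univ_two,
        EuclideanSpace.single_apply]
      fin_cases i <;> simp [hN]
  have hdet : LinearMap.det (Matrix.toEuclideanLin N) = P 0 * Q 1 - P 1 * Q 0 := by
    rw [Matrix.toEuclideanLin_eq_toLin, LinearMap.det_toLin, hN]
    simp [Matrix.det_fin_two]
    ring
  rw [← himg, Measure.addHaar_image_linearMap, scc_std_tri_vol, hdet,
    ← ENNReal.ofReal_mul (abs_nonneg _)]
  ring_nf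

lemma scc_rect_vol (l0 r0 l1 r1 : ℝ) :
    volume {y : V2 | y 0 ∈ Icc l0 r0 ∧ y 1 ∈ Icc l1 r1}
      = ENNReal.ofReal (r0 - l0) * ENNReal.ofReal (r1 - l1) := by
  have hm : MeasurableSet (Icc l0 r0 ×ˢ Icc l1 r1) :=
    (measurableSet_Icc).prod measurableSet_Icc
  have h1 := (volume_preserving_finTwoArrow ℝ).comp
    (EuclideanSpace.volume_preserving_symm_measurableEquiv_toLp (Fin 2))
  have h2 := h1.measure_preimage (s := Icc l0 r0 ×ˢ Icc l1 r1) hm.nullMeasurableSet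
  have h3 : volume (Icc l0 r0 ×ˢ Icc l1 r1)
      = ENNReal.ofReal (r0 - l0) * ENNReal.ofReal (r1 - l1) := by
    rw [show (volume : Measure (ℝ × ℝ)) = (volume : Measure ℝ).prod volume from rfl,
      Measure.prod_prod, Real.volume_Icc, Real.volume_Icc]
  rw [← h3, ← h2]
  rfl


variable (u : Fin 4 → V2)

def mtx : Matrix (Fin 2) (Fin 2) ℝ := !![(u 0) 0, (u 0) 1; (u 1) 0, (u 1) 1]

def fl : V2 →ₗ[ℝ] V2 := Matrix.toEuclideanLin (mtx u)

def dd : ℝ := (u 0) 0 * (u 1) 1 - (u 0) 1 * (u 1) 0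

lemma det_fl : LinearMap.det (fl u) = dd u := by
  rw [fl, Matrix.toEuclideanLin_eq_toLin, LinearMap.det_toLin, mtx]
  simp [Matrix.det_fin_two, dd]

lemma fl_apply0 (x : V2) : fl u x 0 = (inner ℝ (u 0) x : ℝ) := by
  simp [fl, Matrix.toEuclideanLin_apply, Matrix.mulVec, dotProduct, Fin.sum_univ_two,
    PiLp.inner_apply, RCLike.inner_apply, mtx]
  ring

lemma fl_apply1 (x : V2) : fl u x 1 = (inner ℝ (u 1) x : ℝ) := by
  simp [fl, Matrix.toEuclideanLin_apply, Matrix.mulVec, dotProduct, Fin.sum_univ_two,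
    PiLp.inner_apply, RCLike.inner_apply, mtx]
  ring

lemma isUnit_mtx (hli : LinearIndependent ℝ ![u 0, u 1]) : IsUnit (mtx u) := by
  rw [← Matrix.linearIndependent_rows_iff_isUnit]
  have h1 : LinearIndependent ℝ ((WithLp.linearEquiv 2 ℝ (Fin 2 → ℝ)) ∘ ![u 0, u 1]) :=
    hli.map' _ (LinearEquiv.ker _)
  have h2 : (fun i : Fin 2 => mtx u i)
      = (WithLp.linearEquiv 2 ℝ (Fin 2 → ℝ)) ∘ ![u 0, u 1] := by
    funext i j
    fin_cases i <;> fin_cases j <;> rfl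
  rw [show (mtx u).row = fun i : Fin 2 => mtx u i from rfl, h2]
  exact h1

lemma dd_ne (hli : LinearIndependent ℝ ![u 0, u 1]) : dd u ≠ 0 := by
  have h := (isUnit_mtx u hli).map (Matrix.detMonoidHom)
  simp only [Matrix.coe_detMonoidHom] at h
  have : (mtx u).det = dd u := by simp [mtx, Matrix.det_fin_two, dd]
  rw [this] at h
  exact h.ne_zero

lemma det_fl_ne (hli : LinearIndependent ℝ ![u 0, u 1]) : LinearMap.det (fl u) ≠ 0 := by
  rw [det_fl]; exact dd_ne u hli

lemma fl_bij (hli : LinearIndependent ℝ ![u 0, u 1]) : Function.Bijective (fl u) := by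
  have hinj : Function.Injective (fl u) := by
    have h := Matrix.mulVec_injective_iff_isUnit.2 (isUnit_mtx u hli)
    intro x y hxy
    have : (mtx u).mulVec (WithLp.equiv 2 (Fin 2 → ℝ) x) = (mtx u).mulVec (WithLp.equiv 2 (Fin 2 → ℝ) y) := by
      have := congrArg (WithLp.equiv 2 (Fin 2 → ℝ)) hxy
      simpa [fl, Matrix.ofLp_toEuclideanLin_apply] using this
    exact (WithLp.equiv 2 (Fin 2 → ℝ)).injective (h this)
  exact ⟨hinj, (LinearMap.injective_iff_surjective).1 hinj⟩


variable (u : Fin 4 → V2)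

lemma polyP_eq (hu2 : u 2 = -u 0) (hu3 : u 3 = -u 1) (b : Fin 4 → ℝ) :
    polyP u b = fl u ⁻¹' {y : V2 | y 0 ∈ Icc (-b 2) (b 0) ∧ y 1 ∈ Icc (-b 3) (b 1)} := by
  ext x
  simp only [polyP, mem_setOf_eq, mem_preimage, fl_apply0, fl_apply1, mem_Icc]
  constructor
  · intro h
    have h2 := h 2; have h3 := h 3
    rw [hu2, inner_neg_left] at h2
    rw [hu3, inner_neg_left] at h3
    exact ⟨⟨by linarith, h 0⟩, ⟨by linarith, h 1⟩⟩
  · rintro ⟨⟨h2, h0⟩, h3, h1⟩ i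
    fin_cases i
    · exact h0
    · exact h1
    · show (inner ℝ (u 2) x : ℝ) ≤ b 2
      rw [hu2, inner_neg_left]; linarith
    · show (inner ℝ (u 3) x : ℝ) ≤ b 3
      rw [hu3, inner_neg_left]; linarith

variable (hu2 : u 2 = -u 0) (hu3 : u 3 = -u 1) (b : Fin 4 → ℝ) (hb : ∀ i, 0 ≤ b i)

lemma faceF0_eq (hu2 : u 2 = -u 0) (hu3 : u 3 = -u 1) (b : Fin 4 → ℝ) (hb : ∀ i, 0 ≤ b i) :
    faceF u b 0 = fl u ⁻¹' {y : V2 | y 0 = b 0 ∧ y 1 ∈ Icc (-b 3) (b 1)} := by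
  ext x
  simp only [faceF, polyP_eq u hu2 hu3 b, mem_setOf_eq, mem_preimage, mem_Icc, fl_apply0,
    fl_apply1]
  constructor
  · rintro ⟨⟨⟨_, _⟩, hy1⟩, he⟩; exact ⟨he, hy1⟩
  · rintro ⟨he, hy1⟩
    exact ⟨⟨⟨by rw [he]; linarith [hb 0, hb 2], le_of_eq he⟩, hy1⟩, he⟩

lemma faceF2_eq (hu2 : u 2 = -u 0) (hu3 : u 3 = -u 1) (b : Fin 4 → ℝ) (hb : ∀ i, 0 ≤ b i) :
    faceF u b 2 = fl u ⁻¹' {y : V2 | y 0 = -b 2 ∧ y 1 ∈ Icc (-b 3) (b 1)} := by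
  ext x
  simp only [faceF, polyP_eq u hu2 hu3 b, mem_setOf_eq, mem_preimage, mem_Icc, fl_apply0,
    fl_apply1]
  rw [hu2, inner_neg_left]
  constructor
  · rintro ⟨⟨⟨_, _⟩, hy1⟩, he⟩; exact ⟨by linarith, hy1⟩
  · rintro ⟨he, hy1⟩
    exact ⟨⟨⟨le_of_eq he.symm, by rw [he]; linarith [hb 0, hb 2]⟩, hy1⟩, by rw [he]; ring⟩

lemma faceF1_eq (hu2 : u 2 = -u 0) (hu3 : u 3 = -u 1) (b : Fin 4 → ℝ) (hb : ∀ i, 0 ≤ b i) :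
    faceF u b 1 = fl u ⁻¹' {y : V2 | y 0 ∈ Icc (-b 2) (b 0) ∧ y 1 = b 1} := by
  ext x
  simp only [faceF, polyP_eq u hu2 hu3 b, mem_setOf_eq, mem_preimage, mem_Icc, fl_apply0,
    fl_apply1]
  constructor
  · rintro ⟨⟨hy0, ⟨_, _⟩⟩, he⟩; exact ⟨hy0, he⟩
  · rintro ⟨hy0, he⟩
    exact ⟨⟨hy0, ⟨by rw [he]; linarith [hb 1, hb 3], le_of_eq he⟩⟩, he⟩

lemma faceF3_eq (hu2 : u 2 = -u 0) (hu3 : u 3 = -u 1) (b : Fin 4 → ℝ) (hb : ∀ i, 0 ≤ b i) :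
    faceF u b 3 = fl u ⁻¹' {y : V2 | y 0 ∈ Icc (-b 2) (b 0) ∧ y 1 = -b 3} := by
  ext x
  simp only [faceF, polyP_eq u hu2 hu3 b, mem_setOf_eq, mem_preimage, mem_Icc, fl_apply0,
    fl_apply1]
  rw [hu3, inner_neg_left]
  constructor
  · rintro ⟨⟨hy0, ⟨_, _⟩⟩, he⟩; exact ⟨hy0, by linarith⟩
  · rintro ⟨hy0, he⟩
    exact ⟨⟨hy0, ⟨le_of_eq he.symm, by rw [he]; linarith [hb 1, hb 3]⟩⟩, by rw [he]; ring⟩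

lemma cv_eq_of_face (hli : LinearIndependent ℝ ![u 0, u 1]) (b : Fin 4 → ℝ) (i : Fin 4)
    (P Q : V2) (hface : faceF u b i = fl u ⁻¹' (convexHull ℝ {P, Q})) :
    cv u b i = |P 0 * Q 1 - P 1 * Q 0| / (2 * |dd u|) := by
  have hbij := fl_bij u hli
  have hkey : convexHull ℝ (insert 0 (faceF u b i)) = fl u ⁻¹' (convexHull ℝ {0, P, Q}) := by
    rw [hface, ← scc_preimage_insert_zero _ hbij, ← scc_preimage_convexHull _ hbij,
      scc_conv_insert_conv]
  show (volume (convexHull ℝ (insert 0 (faceF u b i)))).toReal = _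
  rw [hkey, Measure.addHaar_preimage_linearMap volume (det_fl_ne u hli), scc_triangle_vol,
    det_fl, ENNReal.toReal_mul, ENNReal.toReal_ofReal (abs_nonneg _),
    ENNReal.toReal_ofReal (div_nonneg (abs_nonneg _) (by norm_num)), abs_inv]
  ring

lemma vol_polyP (hli : LinearIndependent ℝ ![u 0, u 1]) (hu2 : u 2 = -u 0) (hu3 : u 3 = -u 1)
    (b : Fin 4 → ℝ) (hb : ∀ i, 0 ≤ b i) :
    (volume (polyP u b)).toReal = (b 0 + b 2) * (b 1 + b 3) / |dd u| := by
  rw [polyP_eq u hu2 hu3 b, Measure.addHaar_preimage_linearMap volume (det_fl_ne u hli),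
    scc_rect_vol, ENNReal.toReal_mul, ENNReal.toReal_mul, ENNReal.toReal_ofReal (abs_nonneg _),
    ENNReal.toReal_ofReal (by linarith [hb 0, hb 2]),
    ENNReal.toReal_ofReal (by linarith [hb 1, hb 3]), det_fl, abs_inv]
  ring

lemma cv0_eq (hli : LinearIndependent ℝ ![u 0, u 1]) (hu2 : u 2 = -u 0) (hu3 : u 3 = -u 1)
    (b : Fin 4 → ℝ) (hb : ∀ i, 0 ≤ b i) :
    cv u b 0 = b 0 * (b 1 + b 3) / (2 * |dd u|) := by
  have h := cv_eq_of_face u hli b 0 (pt (b 0) (-b 3)) (pt (b 0) (b 1))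
    (by rw [faceF0_eq u hu2 hu3 b hb, scc_vert_seg _ _ _ (by linarith [hb 1, hb 3])])
  rw [h, pt_0, pt_1, pt_0, pt_1,
    show b 0 * b 1 - -b 3 * b 0 = b 0 * (b 1 + b 3) by ring,
    abs_of_nonneg (mul_nonneg (hb 0) (by linarith [hb 1, hb 3]))]

lemma cv2_eq (hli : LinearIndependent ℝ ![u 0, u 1]) (hu2 : u 2 = -u 0) (hu3 : u 3 = -u 1)
    (b : Fin 4 → ℝ) (hb : ∀ i, 0 ≤ b i) :
    cv u b 2 = b 2 * (b 1 + b 3) / (2 * |dd u|) := by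
  have h := cv_eq_of_face u hli b 2 (pt (-b 2) (-b 3)) (pt (-b 2) (b 1))
    (by rw [faceF2_eq u hu2 hu3 b hb, scc_vert_seg _ _ _ (by linarith [hb 1, hb 3])])
  rw [h, pt_0, pt_1, pt_0, pt_1,
    show -b 2 * b 1 - -b 3 * -b 2 = -(b 2 * (b 1 + b 3)) by ring, abs_neg,
    abs_of_nonneg (mul_nonneg (hb 2) (by linarith [hb 1, hb 3]))]

lemma cv1_eq (hli : LinearIndependent ℝ ![u 0, u 1]) (hu2 : u 2 = -u 0) (hu3 : u 3 = -u 1)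
    (b : Fin 4 → ℝ) (hb : ∀ i, 0 ≤ b i) :
    cv u b 1 = b 1 * (b 0 + b 2) / (2 * |dd u|) := by
  have h := cv_eq_of_face u hli b 1 (pt (-b 2) (b 1)) (pt (b 0) (b 1))
    (by rw [faceF1_eq u hu2 hu3 b hb, scc_horiz_seg _ _ _ (by linarith [hb 0, hb 2])])
  rw [h, pt_0, pt_1, pt_0, pt_1,
    show -b 2 * b 1 - b 1 * b 0 = -(b 1 * (b 0 + b 2)) by ring, abs_neg,
    abs_of_nonneg (mul_nonneg (hb 1) (by linarith [hb 0, hb 2]))]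

lemma cv3_eq (hli : LinearIndependent ℝ ![u 0, u 1]) (hu2 : u 2 = -u 0) (hu3 : u 3 = -u 1)
    (b : Fin 4 → ℝ) (hb : ∀ i, 0 ≤ b i) :
    cv u b 3 = b 3 * (b 0 + b 2) / (2 * |dd u|) := by
  have h := cv_eq_of_face u hli b 3 (pt (-b 2) (-b 3)) (pt (b 0) (-b 3))
    (by rw [faceF3_eq u hu2 hu3 b hb, scc_horiz_seg _ _ _ (by linarith [hb 0, hb 2])])
  rw [h, pt_0, pt_1, pt_0, pt_1,
    show -b 2 * -b 3 - -b 3 * b 0 = b 3 * (b 0 + b 2) by ring,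
    abs_of_nonneg (mul_nonneg (hb 3) (by linarith [hb 0, hb 2]))]


variable (u : Fin 4 → V2)

def Ssq : Set (Fin 4 → ℝ) := {g | (∀ i, 0 ≤ g i) ∧ g 0 + g 2 = 1/2 ∧ g 1 + g 3 = 1/2}

lemma Ccv_eq_Ssq (hli : LinearIndependent ℝ ![u 0, u 1]) (hu2 : u 2 = -u 0)
    (hu3 : u 3 = -u 1) : Ccv u = Ssq := by
  have hd := dd_ne u hli
  have hda : 0 < |dd u| := abs_pos.2 hd
  ext g
  constructor
  · rintro ⟨b, hb, hvol, rfl⟩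
    rw [vol_polyP u hli hu2 hu3 b hb, div_eq_one_iff_eq (ne_of_gt hda)] at hvol
    refine ⟨?_, ?_, ?_⟩
    · intro i
      fin_cases i
      · show 0 ≤ cv u b 0
        rw [cv0_eq u hli hu2 hu3 b hb]
        exact div_nonneg (mul_nonneg (hb 0) (by linarith [hb 1, hb 3])) (by positivity)
      · show 0 ≤ cv u b 1
        rw [cv1_eq u hli hu2 hu3 b hb]
        exact div_nonneg (mul_nonneg (hb 1) (by linarith [hb 0, hb 2])) (by positivity)
      · show 0 ≤ cv u b 2
        rw [cv2_eq u hli hu2 hu3 b hb]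
        exact div_nonneg (mul_nonneg (hb 2) (by linarith [hb 1, hb 3])) (by positivity)
      · show 0 ≤ cv u b 3
        rw [cv3_eq u hli hu2 hu3 b hb]
        exact div_nonneg (mul_nonneg (hb 3) (by linarith [hb 0, hb 2])) (by positivity)
    · rw [cv0_eq u hli hu2 hu3 b hb, cv2_eq u hli hu2 hu3 b hb, ← add_div,
        show b 0 * (b 1 + b 3) + b 2 * (b 1 + b 3) = (b 0 + b 2) * (b 1 + b 3) by ring, hvol,
        div_eq_div_iff (by positivity) (by norm_num)]
      ring
    · rw [cv1_eq u hli hu2 hu3 b hb, cv3_eq u hli hu2 hu3 b hb, ← add_div,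
        show b 1 * (b 0 + b 2) + b 3 * (b 0 + b 2) = (b 0 + b 2) * (b 1 + b 3) by ring, hvol,
        div_eq_div_iff (by positivity) (by norm_num)]
      ring
  · rintro ⟨hg, h02, h13⟩
    set r := Real.sqrt |dd u| with hr
    have hrpos : 0 < r := Real.sqrt_pos.2 hda
    have hr2 : r * r = |dd u| := Real.mul_self_sqrt (abs_nonneg _)
    have hbnn : ∀ i, 0 ≤ 2 * g i * r := fun i =>
      mul_nonneg (mul_nonneg (by norm_num) (hg i)) hrpos.le
    refine ⟨fun i => 2 * g i * r, hbnn, ?_, ?_⟩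
    · rw [vol_polyP u hli hu2 hu3 _ hbnn]
      show (2 * g 0 * r + 2 * g 2 * r) * (2 * g 1 * r + 2 * g 3 * r) / |dd u| = 1
      rw [show 2 * g 0 * r + 2 * g 2 * r = r by linear_combination (2*r) * h02,
        show 2 * g 1 * r + 2 * g 3 * r = r by linear_combination (2*r) * h13, hr2,
        div_self (ne_of_gt hda)]
    · funext i
      fin_cases i
      · show g 0 = cv u (fun i => 2 * g i * r) 0
        rw [cv0_eq u hli hu2 hu3 _ hbnn]
        show g 0 = 2 * g 0 * r * (2 * g 1 * r + 2 * g 3 * r) / (2 * |dd u|)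
        rw [show 2 * g 1 * r + 2 * g 3 * r = r by linear_combination (2*r) * h13,
          mul_assoc (2 * g 0) r r, hr2, eq_div_iff (by positivity)]
        ring
      · show g 1 = cv u (fun i => 2 * g i * r) 1
        rw [cv1_eq u hli hu2 hu3 _ hbnn]
        show g 1 = 2 * g 1 * r * (2 * g 0 * r + 2 * g 2 * r) / (2 * |dd u|)
        rw [show 2 * g 0 * r + 2 * g 2 * r = r by linear_combination (2*r) * h02,
          mul_assoc (2 * g 1) r r, hr2, eq_div_iff (by positivity)]
        ring
      · show g 2 = cv u (fun i => 2 * g i * r) 2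
        rw [cv2_eq u hli hu2 hu3 _ hbnn]
        show g 2 = 2 * g 2 * r * (2 * g 1 * r + 2 * g 3 * r) / (2 * |dd u|)
        rw [show 2 * g 1 * r + 2 * g 3 * r = r by linear_combination (2*r) * h13,
          mul_assoc (2 * g 2) r r, hr2, eq_div_iff (by positivity)]
        ring
      · show g 3 = cv u (fun i => 2 * g i * r) 3
        rw [cv3_eq u hli hu2 hu3 _ hbnn]
        show g 3 = 2 * g 3 * r * (2 * g 0 * r + 2 * g 2 * r) / (2 * |dd u|)
        rw [show 2 * g 0 * r + 2 * g 2 * r = r by linear_combination (2*r) * h02,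
          mul_assoc (2 * g 3) r r, hr2, eq_div_iff (by positivity)]
        ring

lemma Ssq_eq_conv :
    Ssq = convexHull ℝ
      {(1 / 2 : ℝ) • (Pi.single 0 1 + Pi.single 1 1),
       (1 / 2 : ℝ) • (Pi.single 0 1 + Pi.single 3 1),
       (1 / 2 : ℝ) • (Pi.single 2 1 + Pi.single 1 1),
       (1 / 2 : ℝ) • ((Pi.single 2 1 : Fin 4 → ℝ) + Pi.single 3 1)} := by
  have e1 : ((1/2:ℝ) • (Pi.single 0 1 + Pi.single 1 1) : Fin 4 → ℝ) = ![1/2,1/2,0,0] := by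
    funext j; fin_cases j <;> simp [Pi.single_apply]
  have e2 : ((1/2:ℝ) • (Pi.single 0 1 + Pi.single 3 1) : Fin 4 → ℝ) = ![1/2,0,0,1/2] := by
    funext j; fin_cases j <;> simp [Pi.single_apply]
  have e3 : ((1/2:ℝ) • (Pi.single 2 1 + Pi.single 1 1) : Fin 4 → ℝ) = ![0,1/2,1/2,0] := by
    funext j; fin_cases j <;> simp [Pi.single_apply]
  have e4 : ((1/2:ℝ) • ((Pi.single 2 1 : Fin 4 → ℝ) + Pi.single 3 1)) = ![0,0,1/2,1/2] := by
    funext j; fin_cases j <;> simp [Pi.single_apply]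
  rw [e1, e2, e3, e4]
  apply Subset.antisymm
  · rintro g ⟨hg, h02, h13⟩
    have hgx : g = ∑ i : Fin 4,
        (![4 * g 0 * g 1, 4 * g 0 * g 3, 4 * g 2 * g 1, 4 * g 2 * g 3] i) •
        (![![1/2,1/2,0,0], ![1/2,0,0,1/2], ![0,1/2,1/2,0], ![0,0,1/2,1/2]] i) := by
      funext j
      fin_cases j <;>
        simp [Fin.sum_univ_four, Matrix.vecHead, Matrix.vecTail] <;>
        [linear_combination (-2 * g 0) * h13; linear_combination (-2 * g 1) * h02;
         linear_combination (-2 * g 2) * h13; linear_combination (-2 * g 3) * h02]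
    rw [hgx]
    apply (convex_convexHull ℝ _).sum_mem
    · intro i _
      fin_cases i <;> exact mul_nonneg (mul_nonneg (by norm_num) (hg _)) (hg _)
    · simp [Fin.sum_univ_four]
      linear_combination (4 * (g 1 + g 3)) * h02 + 2 * h13
    · intro i _
      apply subset_convexHull
      fin_cases i <;> simp
  · apply convexHull_min
    · rintro x (rfl | rfl | rfl | rfl) <;>
        exact ⟨by intro i; fin_cases i <;> norm_num, by norm_num [Matrix.cons_val_two, Matrix.cons_val_three], by norm_num [Matrix.cons_val_two, Matrix.cons_val_three]⟩
    · rintro x hx y hy a b ha hb hab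
      obtain ⟨hx0, hx1, hx2⟩ := hx
      obtain ⟨hy0, hy1, hy2⟩ := hy
      refine ⟨fun i => ?_, ?_, ?_⟩
      · simp only [Pi.add_apply, Pi.smul_apply, smul_eq_mul]
        exact add_nonneg (mul_nonneg ha (hx0 i)) (mul_nonneg hb (hy0 i))
      · simp only [Pi.add_apply, Pi.smul_apply, smul_eq_mul]
        linear_combination a * hx1 + b * hy1 + (1/2 : ℝ) * hab
      · simp only [Pi.add_apply, Pi.smul_apply, smul_eq_mul]
        linear_combination a * hx2 + b * hy2 + (1/2 : ℝ) * hab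


end SccAux

/-- For `U = {±u, ±v}` with `u, v` linearly independent unit vectors, the closure of
the convex hull of the cone-volume set is the stated square. -/
theorem stmt9 (u : Fin 4 → V2)
    (hunit : ∀ i, ‖u i‖ = 1)
    (hu2 : u 2 = -u 0) (hu3 : u 3 = -u 1)
    (hli : LinearIndependent ℝ ![u 0, u 1]) :
    closure (convexHull ℝ (Ccv u)) =
      convexHull ℝ
        {(1 / 2 : ℝ) • (Pi.single 0 1 + Pi.single 1 1),
         (1 / 2 : ℝ) • (Pi.single 0 1 + Pi.single 3 1),
         (1 / 2 : ℝ) • (Pi.single 2 1 + Pi.single 1 1),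
         (1 / 2 : ℝ) • ((Pi.single 2 1 : Fin 4 → ℝ) + Pi.single 3 1)} := by
  rw [SccAux.Ccv_eq_Ssq u hli hu2 hu3, SccAux.Ssq_eq_conv,
    Convex.convexHull_eq (convex_convexHull ℝ _),
    IsClosed.closure_eq (((Set.toFinite _).isCompact_convexHull ℝ).isClosed)]
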